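/- For every integer k ≥ 1, the number of brick-wall lattice paths of the first type in the rectangle R = {0,…,2k} × {0,1,2,3} (width w = 4, odd length l = 2k+1) equals 4·3^k, i.e. B^{(1)}_{2k+1,4} = 4·3^k. -/

import Mathlib

/-- A step of a brick-wall lattice path. `t = true` corresponds to paths of the
first type (up-steps from even points, down-steps from odd points), `t = false`
to paths of the second type (up-steps from odd points, down-steps from even
points). Vertical steps are forbidden from points with first coordinate `0`. -/
def BrickStep (t : Bool) (p q : ℤ × ℤ) : Prop :=
  q = (p.1 + 1, p.2) ∨
  (q = (p.1, p.2 + 1) ∧ p.1 ≠ 0 ∧ (if t then Even (p.1 + p.2) else Odd (p.1 + p.2))) ∨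
  (q = (p.1, p.2 - 1) ∧ p.1 ≠ 0 ∧ (if t then Odd (p.1 + p.2) else Even (p.1 + p.2)))

/-- The set of brick-wall lattice paths (of the first type if `t = true`, of the
second type if `t = false`) in the rectangle `{0,…,l−1} × {0,…,w−1}`: nonempty
lists of pairwise distinct points of the rectangle, starting on the left side,
ending on the right side, whose consecutive differences are admissible steps. -/
def brickPaths (t : Bool) (l w : ℤ) : Set (List (ℤ × ℤ)) :=
  {v | v ≠ [] ∧ v.Nodup ∧
    (∀ p ∈ v, 0 ≤ p.1 ∧ p.1 ≤ l - 1 ∧ 0 ≤ p.2 ∧ p.2 ≤ w - 1) ∧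
    (∀ p ∈ v.head?, p.1 = 0) ∧
    (∀ p ∈ v.getLast?, p.1 = l - 1) ∧
    List.Chain' (BrickStep t) v}

def Ends (l β : ℤ) : Set (List (ℤ × ℤ)) :=
  {v | v ∈ brickPaths true l 4 ∧ v.getLast? = some (l - 1, β)}

lemma BrickStep.fst_le {t : Bool} {p q : ℤ × ℤ} (h : BrickStep t p q) : p.1 ≤ q.1 := by
  rcases h with h | ⟨h, -⟩ | ⟨h, -⟩ <;> simp [h]

lemma chain_fst_le : ∀ (v : List (ℤ × ℤ)), List.Chain' (BrickStep true) v →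
    ∀ q ∈ v, ∀ p ∈ v.getLast?, q.1 ≤ p.1
  | [] => by simp
  | [a] => by simp
  | a :: b :: v => by
    intro h q hq p hp
    rw [List.Chain', List.isChain_cons_cons] at h
    rw [List.getLast?_cons_cons] at hp
    rcases List.mem_cons.1 hq with rfl | hq
    · exact le_trans h.1.fst_le (chain_fst_le (b :: v) h.2 b (by simp) p hp)
    · exact chain_fst_le (b :: v) h.2 q hq p hp

lemma trunc_mem (l γ : ℤ) (v' : List (ℤ × ℤ)) (hne : v' ≠ [])
    (hnd : v'.Nodup) (hbd : ∀ p ∈ v', 0 ≤ p.1 ∧ 0 ≤ p.2 ∧ p.2 ≤ 3)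
    (hhd : ∀ p ∈ v'.head?, p.1 = 0) (hgl : v'.getLast? = some (l - 1, γ))
    (hch : List.Chain' (BrickStep true) v') : v' ∈ Ends l γ := by
  refine ⟨⟨hne, hnd, ?_, hhd, ?_, hch⟩, hgl⟩
  · intro p hp
    have h1 := hbd p hp
    have h2 := chain_fst_le v' hch p hp (l - 1, γ) (by rw [hgl]; rfl)
    exact ⟨h1.1, h2, h1.2.1, by linarith [h1.2.2]⟩
  · intro p hp
    rw [hgl] at hp
    cases hp
    rfl

lemma append_one_mem (l β : ℤ) (hl : 1 ≤ l) (hβ0 : 0 ≤ β) (hβ3 : β ≤ 3)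
    (u : List (ℤ × ℤ)) (hu : u ∈ Ends l β) : u ++ [((l : ℤ), β)] ∈ Ends (l + 1) β := by
  obtain ⟨⟨hne, hnd, hbd, hhd, hlast, hch⟩, hgl⟩ := hu
  refine ⟨⟨by simp, ?_, ?_, ?_, ?_, ?_⟩, ?_⟩
  · refine List.nodup_append.2 ⟨hnd, by simp, ?_⟩
    intro a ha b hs hab; subst hab
    have := (hbd a ha).2.1
    simp at hs
    rw [hs] at this
    simp at this
  · intro p hp
    rcases List.mem_append.1 hp with h | h
    · have := hbd p h
      refine ⟨this.1, by omega, this.2.2.1, this.2.2.2⟩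
    · simp at h
      rw [h]
      refine ⟨by omega, by simp <;> omega, hβ0, hβ3⟩
  · rw [List.head?_append_of_ne_nil _ hne]
    exact hhd
  · intro p hp
    rw [List.getLast?_concat] at hp
    cases hp
    simp <;> omega
  · refine List.isChain_append.2 ⟨hch, by simp, ?_⟩
    intro x hx y hy
    rw [hgl] at hx; cases hx
    simp at hy
    subst hy
    left
    simp <;> omega
  · rw [List.getLast?_concat]
    congr 2 <;> ring

lemma append_two_mem (l γ β : ℤ) (hl : 1 ≤ l) (hβ0 : 0 ≤ β) (hβ3 : β ≤ 3)
    (hγ0 : 0 ≤ γ) (hγ3 : γ ≤ 3) (hγβ : γ ≠ β)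
    (hstep : BrickStep true ((l : ℤ), γ) (l, β))
    (u : List (ℤ × ℤ)) (hu : u ∈ Ends l γ) : u ++ [((l : ℤ), γ), (l, β)] ∈ Ends (l + 1) β := by
  obtain ⟨⟨hne, hnd, hbd, hhd, hlast, hch⟩, hgl⟩ := hu
  have hlst2 : (u ++ [((l : ℤ), γ), (l, β)]).getLast? = some (l, β) := by
    rw [show u ++ [((l : ℤ), γ), (l, β)] = (u ++ [((l : ℤ), γ)]) ++ [((l:ℤ), β)] by simp,
      List.getLast?_concat]
  refine ⟨⟨by simp, ?_, ?_, ?_, ?_, ?_⟩, ?_⟩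
  · refine List.nodup_append.2 ⟨hnd, by simp [Prod.ext_iff, hγβ], ?_⟩
    intro a ha b hs hab; subst hab
    have := (hbd a ha).2.1
    simp at hs
    rcases hs with h | h <;> rw [h] at this <;> simp at this
  · intro p hp
    rcases List.mem_append.1 hp with h | h
    · have := hbd p h
      refine ⟨this.1, by omega, this.2.2.1, this.2.2.2⟩
    · simp at h
      rcases h with h | h <;> rw [h] <;> refine ⟨by omega, by simp <;> omega, by omega, by omega⟩
  · rw [List.head?_append_of_ne_nil _ hne]
    exact hhd
  · intro p hp
    rw [hlst2] at hp
    cases hp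
    simp <;> omega
  · refine List.isChain_append.2 ⟨hch, ?_, ?_⟩
    · exact List.isChain_pair.2 hstep
    · intro x hx y hy
      rw [hgl] at hx; cases hx
      simp at hy
      subst hy
      left
      simp <;> omega
  · rw [hlst2]
    congr 2 <;> ring

lemma ends_succ_subset (l β : ℤ) (hl : 1 ≤ l) (hβ0 : 0 ≤ β) (hβ3 : β ≤ 3) :
    Ends (l + 1) β ⊆
      (fun u => u ++ [((l : ℤ), β)]) '' Ends l β ∪
      (fun u => u ++ [((l : ℤ), β - 1), (l, β)]) ''
        {u ∈ Ends l (β - 1) | 1 ≤ β ∧ Even (l + (β - 1))} ∪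
      (fun u => u ++ [((l : ℤ), β + 1), (l, β)]) ''
        {u ∈ Ends l (β + 1) | β ≤ 2 ∧ Odd (l + (β + 1))} := by
  intro v hv
  obtain ⟨⟨hne, hnd, hbd, hhd, hlast, hch⟩, hgl⟩ := hv
  have e1 : (l : ℤ) + 1 - 1 = l := by ring
  rw [e1] at hgl
  -- v = v' ++ [(l, β)]
  have hmemgl : ((l : ℤ), β) ∈ v.getLast? := by rw [hgl]; rfl
  have hvd := List.dropLast_append_getLast? _ hmemgl
  set v' := v.dropLast with hv'def
  have hne' : v' ≠ [] := by
    intro h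
    rw [h, List.nil_append] at hvd
    have : ((l : ℤ), β).1 = 0 := hhd _ (by rw [← hvd]; rfl)
    simp at this
    omega
  rw [← hvd] at hch hnd hhd hbd
  rw [List.head?_append_of_ne_nil _ hne'] at hhd
  obtain ⟨hch', -, hstep⟩ := List.isChain_append.1 hch
  obtain ⟨p, hp⟩ := Option.isSome_iff_exists.1 (List.getLast?_isSome.2 hne')
  have hstep1 : BrickStep true p ((l : ℤ), β) := hstep p (by rw [hp]; rfl) _ rfl
  have hpv : p ∈ v' := List.mem_of_mem_getLast? (by rw [hp]; rfl)
  have hbd' : ∀ q ∈ v', 0 ≤ q.1 ∧ 0 ≤ q.2 ∧ q.2 ≤ 3 := by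
    intro q hq
    have := hbd q (List.mem_append_left _ hq)
    exact ⟨this.1, this.2.2.1, by linarith [this.2.2.2]⟩
  rcases hstep1 with h | ⟨h, h0, hev⟩ | ⟨h, h0, hod⟩
  · -- right step: p = (l-1, β)
    have h1 : (l : ℤ) = p.1 + 1 := congrArg Prod.fst h
    have h2 : β = p.2 := congrArg Prod.snd h
    have hpval : p = ((l : ℤ) - 1, β) := by
      rw [Prod.ext_iff]; constructor <;> simp <;> omega
    left; left
    refine ⟨v', trunc_mem l β v' hne' hnd.of_append_left hbd' hhd (by rw [← hpval, hp]) hch', hvd⟩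
  · -- up step into (l, β): p = (l, β - 1)
    rw [if_pos rfl] at hev
    have h1 : p.1 = (l : ℤ) := (congrArg Prod.fst h).symm
    have h2 : p.2 = β - 1 := by have := congrArg Prod.snd h; simp at this; omega
    have hβ1 : 1 ≤ β := by have := (hbd' p hpv).2.1; omega
    have hev' : Even (l + (β - 1)) := by rw [h1, h2] at hev; exact hev
    -- peel v' = v'' ++ [p]
    have hvd2 := List.dropLast_append_getLast? _ (show p ∈ v'.getLast? by rw [hp]; rfl)
    set v'' := v'.dropLast with hv''def
    have hne'' : v'' ≠ [] := by
      intro hh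
      rw [hh, List.nil_append] at hvd2
      have : p.1 = 0 := hhd p (by rw [← hvd2]; rfl)
      omega
    rw [← hvd2] at hch' hnd hhd hbd'
    rw [List.head?_append_of_ne_nil _ hne''] at hhd
    obtain ⟨hch'', -, hstep2⟩ := List.isChain_append.1 hch'
    obtain ⟨q, hq⟩ := Option.isSome_iff_exists.1 (List.getLast?_isSome.2 hne'')
    have hstep2' : BrickStep true q p := hstep2 q (by rw [hq]; rfl) _ rfl
    have hbd'' : ∀ r ∈ v'', 0 ≤ r.1 ∧ 0 ≤ r.2 ∧ r.2 ≤ 3 := fun r hr =>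
      hbd' r (List.mem_append_left _ hr)
    rcases hstep2' with hh | ⟨hh, hh0, hhev⟩ | ⟨hh, hh0, hhod⟩
    · -- right step into p: q = (l - 1, β - 1)
      have g1 : p.1 = q.1 + 1 := by rw [hh]
      have g2 : p.2 = q.2 := by rw [hh]
      have hqval : q = ((l : ℤ) - 1, β - 1) := by
        rw [Prod.ext_iff]; constructor <;> omega
      left; right
      refine ⟨v'', ⟨trunc_mem l (β - 1) v'' hne'' hnd.of_append_left.of_append_left hbd'' hhd
        (by rw [← hqval, hq]) hch'', hβ1, hev'⟩, ?_⟩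
      show v'' ++ [((l : ℤ), β - 1), (l, β)] = v
      rw [← hvd, ← hvd2]
      have : p = ((l : ℤ), β - 1) := by rw [Prod.ext_iff]; constructor <;> omega
      rw [this]
      simp
    · -- up then up: parity contradiction
      exfalso
      rw [if_pos rfl] at hhev
      have g1 : p.1 = q.1 := by rw [hh]
      have g2 : p.2 = q.2 + 1 := by rw [hh]
      rw [Int.even_iff] at hev hhev
      omega
    · -- down then up: q = (l, β), nodup contradiction
      exfalso
      have g1 : p.1 = q.1 := by rw [hh]
      have g2 : p.2 = q.2 - 1 := by rw [hh]
      have hqval : q = ((l : ℤ), β) := by rw [Prod.ext_iff]; constructor <;> omega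
      have hdisj := (List.nodup_append.1 hnd).2.2
      exact hdisj _ (List.mem_append_left _ (List.mem_of_mem_getLast? (by rw [hq]; rfl)))
        _ (by rw [hqval]; simp) rfl
  · -- down step into (l, β): p = (l, β + 1)
    rw [if_pos rfl] at hod
    have h1 : p.1 = (l : ℤ) := (congrArg Prod.fst h).symm
    have h2 : p.2 = β + 1 := by have := congrArg Prod.snd h; simp at this; omega
    have hβ2 : β ≤ 2 := by have := (hbd' p hpv).2.2; omega
    have hod' : Odd (l + (β + 1)) := by rw [h1, h2] at hod; exact hod
    have hvd2 := List.dropLast_append_getLast? _ (show p ∈ v'.getLast? by rw [hp]; rfl)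
    set v'' := v'.dropLast with hv''def
    have hne'' : v'' ≠ [] := by
      intro hh
      rw [hh, List.nil_append] at hvd2
      have : p.1 = 0 := hhd p (by rw [← hvd2]; rfl)
      omega
    rw [← hvd2] at hch' hnd hhd hbd'
    rw [List.head?_append_of_ne_nil _ hne''] at hhd
    obtain ⟨hch'', -, hstep2⟩ := List.isChain_append.1 hch'
    obtain ⟨q, hq⟩ := Option.isSome_iff_exists.1 (List.getLast?_isSome.2 hne'')
    have hstep2' : BrickStep true q p := hstep2 q (by rw [hq]; rfl) _ rfl
    have hbd'' : ∀ r ∈ v'', 0 ≤ r.1 ∧ 0 ≤ r.2 ∧ r.2 ≤ 3 := fun r hr =>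
      hbd' r (List.mem_append_left _ hr)
    rcases hstep2' with hh | ⟨hh, hh0, hhev⟩ | ⟨hh, hh0, hhod⟩
    · have g1 : p.1 = q.1 + 1 := by rw [hh]
      have g2 : p.2 = q.2 := by rw [hh]
      have hqval : q = ((l : ℤ) - 1, β + 1) := by
        rw [Prod.ext_iff]; constructor <;> omega
      right
      refine ⟨v'', ⟨trunc_mem l (β + 1) v'' hne'' hnd.of_append_left.of_append_left hbd'' hhd
        (by rw [← hqval, hq]) hch'', hβ2, hod'⟩, ?_⟩
      show v'' ++ [((l : ℤ), β + 1), (l, β)] = v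
      rw [← hvd, ← hvd2]
      have : p = ((l : ℤ), β + 1) := by rw [Prod.ext_iff]; constructor <;> omega
      rw [this]
      simp
    · -- up then down: q = (l, β), nodup contradiction
      exfalso
      have g1 : p.1 = q.1 := by rw [hh]
      have g2 : p.2 = q.2 + 1 := by rw [hh]
      have hqval : q = ((l : ℤ), β) := by rw [Prod.ext_iff]; constructor <;> omega
      have hdisj := (List.nodup_append.1 hnd).2.2
      exact hdisj _ (List.mem_append_left _ (List.mem_of_mem_getLast? (by rw [hq]; rfl)))
        _ (by rw [hqval]; simp) rfl
    · -- down then down: parity contradiction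
      exfalso
      rw [if_pos rfl] at hhod
      have g1 : p.1 = q.1 := by rw [hh]
      have g2 : p.2 = q.2 - 1 := by rw [hh]
      rw [Int.odd_iff] at hod hhod
      omega

lemma ends_succ_eq (l β : ℤ) (hl : 1 ≤ l) (hβ0 : 0 ≤ β) (hβ3 : β ≤ 3) :
    Ends (l + 1) β =
      (fun u => u ++ [((l : ℤ), β)]) '' Ends l β ∪
      (fun u => u ++ [((l : ℤ), β - 1), (l, β)]) ''
        {u ∈ Ends l (β - 1) | 1 ≤ β ∧ Even (l + (β - 1))} ∪
      (fun u => u ++ [((l : ℤ), β + 1), (l, β)]) ''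
        {u ∈ Ends l (β + 1) | β ≤ 2 ∧ Odd (l + (β + 1))} := by
  apply Set.Subset.antisymm (ends_succ_subset l β hl hβ0 hβ3)
  rintro v ((⟨u, hu, rfl⟩ | ⟨u, ⟨hu, hβ1, hev⟩, rfl⟩) | ⟨u, ⟨hu, hβ2, hod⟩, rfl⟩)
  · exact append_one_mem l β hl hβ0 hβ3 u hu
  · refine append_two_mem l (β - 1) β hl hβ0 hβ3 (by omega) (by omega) (by omega) ?_ u hu
    right; left
    refine ⟨by simp, by intro hh; simp at hh; omega, by simpa using hev⟩
  · refine append_two_mem l (β + 1) β hl hβ0 hβ3 (by omega) (by omega) (by omega) ?_ u hu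
    right; right
    refine ⟨by simp, by intro hh; simp at hh; omega, by simpa using hod⟩

lemma sep_prop (S : Set (List (ℤ × ℤ))) (P : Prop) [Decidable P] :
    {u ∈ S | P} = if P then S else ∅ := by
  split <;> rename_i h <;> ext x <;> simp [h]

lemma ends_getLast {l β : ℤ} {u : List (ℤ × ℤ)} (hu : u ∈ Ends l β) :
    u.getLast? = some (l - 1, β) := hu.2

lemma ends_succ_ncard (l β : ℤ) (hl : 1 ≤ l) (hβ0 : 0 ≤ β) (hβ3 : β ≤ 3)
    (hfin : ∀ γ, 0 ≤ γ → γ ≤ 3 → (Ends l γ).Finite) :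
    (Ends (l + 1) β).Finite ∧
    (Ends (l + 1) β).ncard = (Ends l β).ncard
      + (if 1 ≤ β ∧ Even (l + (β - 1)) then (Ends l (β - 1)).ncard else 0)
      + (if β ≤ 2 ∧ Odd (l + (β + 1)) then (Ends l (β + 1)).ncard else 0) := by
  classical
  rw [ends_succ_eq l β hl hβ0 hβ3]
  set A := (fun u => u ++ [((l : ℤ), β)]) '' Ends l β with hA
  set B := (fun u => u ++ [((l : ℤ), β - 1), (l, β)]) ''
      {u ∈ Ends l (β - 1) | 1 ≤ β ∧ Even (l + (β - 1))} with hB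
  set C := (fun u => u ++ [((l : ℤ), β + 1), (l, β)]) ''
      {u ∈ Ends l (β + 1) | β ≤ 2 ∧ Odd (l + (β + 1))} with hC
  have hBsub : {u ∈ Ends l (β - 1) | 1 ≤ β ∧ Even (l + (β - 1))} ⊆ Ends l (β - 1) :=
    Set.sep_subset _ _
  have hCsub : {u ∈ Ends l (β + 1) | β ≤ 2 ∧ Odd (l + (β + 1))} ⊆ Ends l (β + 1) :=
    Set.sep_subset _ _
  have hAfin : A.Finite := ((hfin β hβ0 hβ3).image _)
  have hBfin : B.Finite := by
    by_cases hb : 1 ≤ β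
    · exact (((hfin (β - 1) (by omega) (by omega)).subset hBsub).image _)
    · have : {u ∈ Ends l (β - 1) | 1 ≤ β ∧ Even (l + (β - 1))} = ∅ := by
        ext x; simp; intro _ h _; omega
      rw [hB, this]; simp
  have hCfin : C.Finite := by
    by_cases hb : β ≤ 2
    · exact (((hfin (β + 1) (by omega) (by omega)).subset hCsub).image _)
    · have : {u ∈ Ends l (β + 1) | β ≤ 2 ∧ Odd (l + (β + 1))} = ∅ := by
        ext x; simp; intro _ h _; omega
      rw [hC, this]; simp
  -- disjointness via dropLast.getLast?
  have keyA : ∀ v ∈ A, v.dropLast.getLast? = some (l - 1, β) := by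
    rintro v ⟨u, hu, rfl⟩
    simp only [List.dropLast_concat]
    exact ends_getLast hu
  have keyB : ∀ v ∈ B, v.dropLast.getLast? = some (l, β - 1) := by
    rintro v ⟨u, hu, rfl⟩
    show (u ++ [((l : ℤ), β - 1), (l, β)]).dropLast.getLast? = _
    rw [show u ++ [((l : ℤ), β - 1), (l, β)] = (u ++ [((l : ℤ), β - 1)]) ++ [((l : ℤ), β)] by simp,
      List.dropLast_concat, List.getLast?_concat]
  have keyC : ∀ v ∈ C, v.dropLast.getLast? = some (l, β + 1) := by
    rintro v ⟨u, hu, rfl⟩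
    show (u ++ [((l : ℤ), β + 1), (l, β)]).dropLast.getLast? = _
    rw [show u ++ [((l : ℤ), β + 1), (l, β)] = (u ++ [((l : ℤ), β + 1)]) ++ [((l : ℤ), β)] by simp,
      List.dropLast_concat, List.getLast?_concat]
  have hdAB : Disjoint A B := by
    rw [Set.disjoint_left]
    intro v hva hvb
    have := (keyA v hva).symm.trans (keyB v hvb)
    simp [Prod.ext_iff] at this <;> omega
  have hdAC : Disjoint A C := by
    rw [Set.disjoint_left]
    intro v hva hvc
    have := (keyA v hva).symm.trans (keyC v hvc)
    simp [Prod.ext_iff] at this <;> omega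
  have hdBC : Disjoint B C := by
    rw [Set.disjoint_left]
    intro v hvb hvc
    have := (keyB v hvb).symm.trans (keyC v hvc)
    simp [Prod.ext_iff] at this <;> omega
  constructor
  · exact (hAfin.union hBfin).union hCfin
  rw [Set.ncard_union_eq (by exact (Set.disjoint_union_left).2 ⟨hdAC, hdBC⟩)
    (hAfin.union hBfin) hCfin,
    Set.ncard_union_eq hdAB hAfin hBfin]
  have cA : A.ncard = (Ends l β).ncard :=
    Set.ncard_image_of_injective _ (List.append_left_injective _)
  have cB : B.ncard = if 1 ≤ β ∧ Even (l + (β - 1)) then (Ends l (β - 1)).ncard else 0 := by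
    rw [hB, sep_prop]
    split
    · exact Set.ncard_image_of_injective _ (List.append_left_injective _)
    · simp
  have cC : C.ncard = if β ≤ 2 ∧ Odd (l + (β + 1)) then (Ends l (β + 1)).ncard else 0 := by
    rw [hC, sep_prop]
    split
    · exact Set.ncard_image_of_injective _ (List.append_left_injective _)
    · simp
  rw [cA, cB, cC]

lemma ends_one' (β : ℤ) (h0 : 0 ≤ β) (h3 : β ≤ 3) : Ends 1 β = {[((0 : ℤ), β)]} := by
  ext v
  constructor
  · rintro ⟨⟨hne, hnd, hbd, hhd, hlast, hch⟩, hgl⟩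
    match v with
    | [] => exact absurd rfl hne
    | [p] =>
      simp only [List.getLast?_singleton, Option.some_inj] at hgl
      simp [hgl]
    | p :: q :: rest =>
      exfalso
      have hp : p.1 = 0 := hhd p rfl
      have hq := hbd q (by simp)
      rw [List.Chain', List.isChain_cons_cons] at hch
      rcases hch.1 with h | ⟨-, h, -⟩ | ⟨-, h, -⟩
      · have : q.1 = p.1 + 1 := by rw [h]
        omega
      · exact h hp
      · exact h hp
  · rintro rfl
    refine ⟨⟨by simp, by simp, ?_, by simp, by simp, by simp [List.Chain']⟩, by simp⟩
    rintro p hp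
    simp at hp
    simp [hp]
    omega

lemma ends_card (k : ℕ) :
    ∀ β : ℤ, 0 ≤ β → β ≤ 3 →
      (Ends (2 * (k : ℤ) + 1) β).Finite ∧ (Ends (2 * (k : ℤ) + 1) β).ncard = 3 ^ k := by
  induction k with
  | zero =>
    intro β h0 h3
    norm_num [ends_one' β h0 h3]
  | succ k ih =>
    set l : ℤ := 2 * (k : ℤ) + 1 with hldef
    have hl : 1 ≤ l := by rw [hldef]; omega
    have hfin : ∀ γ, 0 ≤ γ → γ ≤ 3 → (Ends l γ).Finite := fun γ h0 h3 => (ih γ h0 h3).1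
    have hc : ∀ γ, 0 ≤ γ → γ ≤ 3 → (Ends l γ).ncard = 3 ^ k := fun γ h0 h3 => (ih γ h0 h3).2
    -- first step: l → l + 1, l is odd
    have s0 := ends_succ_ncard l 0 hl (by norm_num) (by norm_num) hfin
    have s1 := ends_succ_ncard l 1 hl (by norm_num) (by norm_num) hfin
    have s2 := ends_succ_ncard l 2 hl (by norm_num) (by norm_num) hfin
    have s3 := ends_succ_ncard l 3 hl (by norm_num) (by norm_num) hfin
    rw [if_neg (by rintro ⟨h, -⟩; omega),
        if_neg (by rintro ⟨-, h⟩; rw [Int.odd_iff] at h; omega)] at s0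
    rw [if_neg (by rintro ⟨-, h⟩; rw [Int.even_iff] at h; omega),
        if_pos ⟨by norm_num, by rw [Int.odd_iff]; omega⟩] at s1
    rw [if_pos ⟨by norm_num, by rw [Int.even_iff]; omega⟩,
        if_neg (by rintro ⟨-, h⟩; rw [Int.odd_iff] at h; omega)] at s2
    rw [if_neg (by rintro ⟨-, h⟩; rw [Int.even_iff] at h; omega),
        if_neg (by rintro ⟨h, -⟩; omega)] at s3
    norm_num at s0 s1 s2 s3
    have c0 : (Ends (l + 1) 0).ncard = 3 ^ k := by
      rw [s0.2, hc 0 (by norm_num) (by norm_num)]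
    have c1 : (Ends (l + 1) 1).ncard = 2 * 3 ^ k := by
      rw [s1.2, hc 1 (by norm_num) (by norm_num), hc 2 (by norm_num) (by norm_num)]; ring
    have c2 : (Ends (l + 1) 2).ncard = 2 * 3 ^ k := by
      rw [s2.2, hc 2 (by norm_num) (by norm_num), hc 1 (by norm_num) (by norm_num)]; ring
    have c3 : (Ends (l + 1) 3).ncard = 3 ^ k := by
      rw [s3.2, hc 3 (by norm_num) (by norm_num)]
    have hfin' : ∀ γ, 0 ≤ γ → γ ≤ 3 → (Ends (l + 1) γ).Finite := by
      intro γ h0 h3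
      have : γ = 0 ∨ γ = 1 ∨ γ = 2 ∨ γ = 3 := by omega
      rcases this with rfl | rfl | rfl | rfl
      exacts [s0.1, s1.1, s2.1, s3.1]
    -- second step: l + 1 → l + 2, l + 1 is even
    have hl' : 1 ≤ l + 1 := by omega
    have t0 := ends_succ_ncard (l + 1) 0 hl' (by norm_num) (by norm_num) hfin'
    have t1 := ends_succ_ncard (l + 1) 1 hl' (by norm_num) (by norm_num) hfin'
    have t2 := ends_succ_ncard (l + 1) 2 hl' (by norm_num) (by norm_num) hfin'
    have t3 := ends_succ_ncard (l + 1) 3 hl' (by norm_num) (by norm_num) hfin'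
    rw [if_neg (by rintro ⟨h, -⟩; omega),
        if_pos ⟨by norm_num, by rw [Int.odd_iff]; omega⟩] at t0
    rw [if_pos ⟨by norm_num, by rw [Int.even_iff]; omega⟩,
        if_neg (by rintro ⟨-, h⟩; rw [Int.odd_iff] at h; omega)] at t1
    rw [if_neg (by rintro ⟨-, h⟩; rw [Int.even_iff] at h; omega),
        if_pos ⟨by norm_num, by rw [Int.odd_iff]; omega⟩] at t2
    rw [if_pos ⟨by norm_num, by rw [Int.even_iff]; omega⟩,
        if_neg (by rintro ⟨h, -⟩; omega)] at t3
    norm_num at t0 t1 t2 t3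
    intro β h0 h3
    have hcast : (2 * ((k : ℤ) + 1) + 1) = l + 1 + 1 := by rw [hldef]; ring
    have key : ∀ β' : ℤ, 0 ≤ β' → β' ≤ 3 →
        (Ends (l + 1 + 1) β').Finite ∧ (Ends (l + 1 + 1) β').ncard = 3 ^ (k + 1) := by
      intro β' hb0 hb3
      have : β' = 0 ∨ β' = 1 ∨ β' = 2 ∨ β' = 3 := by omega
      rcases this with rfl | rfl | rfl | rfl
      · exact ⟨t0.1, by rw [t0.2, c0, c1]; ring⟩
      · exact ⟨t1.1, by rw [t1.2, c1, c0]; ring⟩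
      · exact ⟨t2.1, by rw [t2.2, c2, c3]; ring⟩
      · exact ⟨t3.1, by rw [t3.2, c3, c2]; ring⟩
    have := key β h0 h3
    rwa [show (2 * ((k : ℕ) + 1 : ℕ) : ℤ) + 1 = l + 1 + 1 by push_cast [hldef]; ring]

lemma paths_eq_union (l : ℤ) (hl : 1 ≤ l) :
    brickPaths true l 4 = ((Ends l 0 ∪ Ends l 1) ∪ Ends l 2) ∪ Ends l 3 := by
  ext v
  constructor
  · intro hv
    obtain ⟨hne, hnd, hbd, hhd, hlast, hch⟩ := hv
    obtain ⟨p, hp⟩ := Option.isSome_iff_exists.1 (List.getLast?_isSome.2 hne)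
    have hp1 : p.1 = l - 1 := hlast p (by rw [hp]; rfl)
    have hpv : p ∈ v := List.mem_of_mem_getLast? (by rw [hp]; rfl)
    have hbdp := hbd p hpv
    have hglp : v.getLast? = some (l - 1, p.2) := by
      rw [hp]; congr 1; rw [Prod.ext_iff]; exact ⟨hp1, rfl⟩
    have hmem : ∀ β : ℤ, p.2 = β → v ∈ Ends l β := by
      rintro β rfl
      exact ⟨⟨hne, hnd, hbd, hhd, hlast, hch⟩, hglp⟩
    have : p.2 = 0 ∨ p.2 = 1 ∨ p.2 = 2 ∨ p.2 = 3 := by omega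
    rcases this with h | h | h | h
    · exact Or.inl (Or.inl (Or.inl (hmem 0 h)))
    · exact Or.inl (Or.inl (Or.inr (hmem 1 h)))
    · exact Or.inl (Or.inr (hmem 2 h))
    · exact Or.inr (hmem 3 h)
  · rintro (((h | h) | h) | h) <;> exact h.1

/-- For every integer `k ≥ 1`, the number of brick-wall lattice paths of the
first type in the rectangle `{0,…,2k} × {0,1,2,3}` (width 4, odd length
`l = 2k+1`) equals `4 · 3^k`. -/
theorem brickPaths_first_width_four_odd_length (k : ℕ) (hk : 1 ≤ k) :
    (brickPaths true (2 * (k : ℤ) + 1) 4).ncard = 4 * 3 ^ k := by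
  have h4 := ends_card k
  set l : ℤ := 2 * (k : ℤ) + 1 with hldef
  have hl : 1 ≤ l := by rw [hldef]; omega
  have hfin : ∀ β : ℤ, 0 ≤ β → β ≤ 3 → (Ends l β).Finite := fun β h0 h3 => (h4 β h0 h3).1
  have hc : ∀ β : ℤ, 0 ≤ β → β ≤ 3 → (Ends l β).ncard = 3 ^ k := fun β h0 h3 => (h4 β h0 h3).2
  have hd : ∀ β γ : ℤ, β ≠ γ → Disjoint (Ends l β) (Ends l γ) := by
    intro β γ hne
    rw [Set.disjoint_left]
    rintro v ⟨-, h1⟩ ⟨-, h2⟩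
    rw [h1] at h2
    simp [Prod.ext_iff] at h2
    exact hne h2
  rw [paths_eq_union l hl,
    Set.ncard_union_eq (by
      refine Set.disjoint_union_left.2 ⟨Set.disjoint_union_left.2 ⟨?_, ?_⟩, ?_⟩ <;>
        exact hd _ _ (by norm_num))
      (((hfin 0 (by norm_num) (by norm_num)).union (hfin 1 (by norm_num) (by norm_num))).union
        (hfin 2 (by norm_num) (by norm_num))) (hfin 3 (by norm_num) (by norm_num)),
    Set.ncard_union_eq (by
      refine Set.disjoint_union_left.2 ⟨?_, ?_⟩ <;> exact hd _ _ (by norm_num))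
      ((hfin 0 (by norm_num) (by norm_num)).union (hfin 1 (by norm_num) (by norm_num)))
      (hfin 2 (by norm_num) (by norm_num)),
    Set.ncard_union_eq (hd 0 1 (by norm_num)) (hfin 0 (by norm_num) (by norm_num))
      (hfin 1 (by norm_num) (by norm_num)),
    hc 0 (by norm_num) (by norm_num), hc 1 (by norm_num) (by norm_num),
    hc 2 (by norm_num) (by norm_num), hc 3 (by norm_num) (by norm_num)]
  ring
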